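/- Let m ≥ 2 be an even natural number. Then B = (-1)^{m/2} · (1 − m + ∑_{k=0}^{m/2 − 2} C(m-1, 2k+1) · (C(m-1, 2k+2) − C(m-1, 2k))) equals C(m-1, m/2). -/

import Mathlib

open Polynomial Finset

lemma aux_term (n b k : ℕ) :
    ((-X : ℤ[X]) ^ b * 1 ^ (n - b) * (n.choose b : ℤ[X])).coeff k
      = if k = b then (-1) ^ b * (n.choose b : ℤ) else 0 := by
  have h1 : ((-X : ℤ[X]) ^ b * 1 ^ (n - b) * (n.choose b : ℤ[X]))
      = C ((-1) ^ b * (n.choose b : ℤ)) * X ^ b := by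
    rw [neg_pow, one_pow, mul_one]
    rw [map_mul]
    ring_nf
    simp [map_pow]
    ring
  rw [h1, coeff_C_mul, coeff_X_pow]
  split <;> simp

lemma aux_coeff_one_sub_X_pow (n k : ℕ) :
    ((1 - X : ℤ[X]) ^ n).coeff k = (-1) ^ k * n.choose k := by
  have h : (1 - X : ℤ[X]) = -X + 1 := by ring
  rw [h, add_pow, finset_sum_coeff]
  simp only [aux_term]
  rw [Finset.sum_ite_eq]
  split
  · rfl
  · rename_i hk
    simp only [Finset.mem_range, not_lt] at hk
    rw [Nat.choose_eq_zero_of_lt (by omega)]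
    simp

lemma aux_term2 (n b a : ℕ) :
    ((-X ^ 2 : ℤ[X]) ^ b * 1 ^ (n - b) * (n.choose b : ℤ[X])).coeff (2 * a)
      = if b = a then (-1) ^ b * (n.choose b : ℤ) else 0 := by
  have h1 : ((-X ^ 2 : ℤ[X]) ^ b * 1 ^ (n - b) * (n.choose b : ℤ[X]))
      = C ((-1) ^ b * (n.choose b : ℤ)) * X ^ (2 * b) := by
    rw [neg_pow, one_pow, mul_one, map_mul, ← pow_mul]
    ring_nf
    simp [map_pow]
    ring
  rw [h1, coeff_C_mul, coeff_X_pow]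
  by_cases hba : b = a
  · simp [hba]
  · rw [if_neg (by omega : ¬(2 * a = 2 * b)), if_neg hba, mul_zero]

lemma aux_coeff_one_sub_X_sq_pow (n a : ℕ) (ha : a ≤ n) :
    ((1 - X ^ 2 : ℤ[X]) ^ n).coeff (2 * a) = (-1) ^ a * n.choose a := by
  have h : (1 - X ^ 2 : ℤ[X]) = -X ^ 2 + 1 := by ring
  rw [h, add_pow, finset_sum_coeff]
  simp only [aux_term2]
  rw [Finset.sum_ite_eq']
  rw [if_pos (Finset.mem_range.2 (by omega))]

lemma key (h : ℕ) :
    ∑ j ∈ Finset.range (2 * h + 1),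
      (-1 : ℤ) ^ j * ((2 * h + 1).choose j : ℤ) * ((2 * h + 1).choose (j + 1) : ℤ)
      = (-1) ^ h * ((2 * h + 1).choose h : ℤ) := by
  set n := 2 * h + 1 with hn
  have hmul : ((1 + X : ℤ[X]) ^ n) * ((1 - X) ^ n) = (1 - X ^ 2) ^ n := by
    rw [← mul_pow]; ring_nf
  have h1 := coeff_mul ((1 + X : ℤ[X]) ^ n) ((1 - X) ^ n) (2 * h)
  rw [hmul, aux_coeff_one_sub_X_sq_pow n h (by omega),
    Finset.Nat.sum_antidiagonal_eq_sum_range_succ_mk] at h1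
  rw [h1]
  apply Finset.sum_congr rfl
  intro j hj
  simp only [Finset.mem_range] at hj
  rw [coeff_one_add_X_pow, aux_coeff_one_sub_X_pow]
  have hs : ((-1 : ℤ)) ^ (2 * h - j) = (-1) ^ j := by
    have h2 : (-1 : ℤ) ^ (2 * h - j) * (-1) ^ j = (-1) ^ (2 * h) := by
      rw [← pow_add]; congr 1; omega
    have h3 : ((-1 : ℤ)) ^ (2 * h) = 1 := by simp [pow_mul]
    have h4 : ((-1 : ℤ)) ^ j * (-1) ^ j = 1 := by
      rw [← mul_pow]; simp
    calc (-1 : ℤ) ^ (2 * h - j) = (-1) ^ (2 * h - j) * ((-1) ^ j * (-1) ^ j) := by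
          rw [h4, mul_one]
      _ = ((-1) ^ (2 * h - j) * (-1) ^ j) * (-1) ^ j := by ring
      _ = (-1) ^ j := by rw [h2, h3, one_mul]
  have hc : (2 * h - j) = n - (j + 1) := by omega
  rw [hs, hc, Nat.choose_symm (by omega)]
  ring

lemma pair (f : ℕ → ℤ) (h : ℕ) :
    ∑ j ∈ Finset.range (2 * h), f j = ∑ k ∈ Finset.range h, (f (2 * k) + f (2 * k + 1)) := by
  induction h with
  | zero => simp
  | succ n ih =>
    have e : 2 * (n + 1) = (2 * n + 1) + 1 := by ring
    rw [e, Finset.sum_range_succ, Finset.sum_range_succ, Finset.sum_range_succ, ih]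
    ring

theorem stmt_8 (m : ℕ) (hm : 2 ≤ m) (hme : Even m) :
    (-1 : ℤ) ^ (m / 2) *
      (1 - (m : ℤ) +
        ∑ k ∈ Finset.range (m / 2 - 1),
          ((m - 1).choose (2 * k + 1) : ℤ) *
            (((m - 1).choose (2 * k + 2) : ℤ) - ((m - 1).choose (2 * k) : ℤ))) =
    ((m - 1).choose (m / 2) : ℤ) := by
  obtain ⟨t, ht⟩ := hme
  have h1t : 1 ≤ t := by omega
  set h := t - 1 with hh
  have e1 : m / 2 = h + 1 := by omega
  have e2 : m - 1 = 2 * h + 1 := by omega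
  have e3 : m / 2 - 1 = h := by omega
  have e4 : (m : ℤ) = 2 * h + 2 := by
    have : m = 2 * h + 2 := by omega
    exact_mod_cast congrArg (Nat.cast : ℕ → ℤ) this
  rw [e1, e2, e4, Nat.add_sub_cancel]
  set n := 2 * h + 1 with hn
  set g : ℕ → ℤ := fun j => (-1 : ℤ) ^ j * (n.choose j : ℤ) * (n.choose (j + 1) : ℤ) with hg
  have hkey : ∑ j ∈ Finset.range (2 * h + 1), g j = (-1) ^ h * (n.choose h : ℤ) := key h
  have hpair : ∑ j ∈ Finset.range (2 * h), g j
      = -∑ k ∈ Finset.range h,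
          ((n.choose (2 * k + 1) : ℤ) * ((n.choose (2 * k + 2) : ℤ) - (n.choose (2 * k) : ℤ))) := by
    rw [pair, ← Finset.sum_neg_distrib]
    apply Finset.sum_congr rfl
    intro k _
    have p1 : (-1 : ℤ) ^ (2 * k) = 1 := by simp [pow_mul]
    have p2 : (-1 : ℤ) ^ (2 * k + 1) = -1 := by rw [pow_succ, p1]; ring
    simp only [hg, p1, p2]
    have : 2 * k + 1 + 1 = 2 * k + 2 := rfl
    rw [this]
    ring
  have hg2h : g (2 * h) = (2 * h + 1 : ℤ) := by
    have c1 : n.choose (2 * h) = 2 * h + 1 := by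
      have := Nat.choose_symm (n := 2 * h + 1) (k := 1) (by omega)
      rw [Nat.add_sub_cancel, Nat.choose_one_right] at this
      exact this
    have c2 : n.choose (2 * h + 1) = 1 := by rw [hn, Nat.choose_self]
    have p1 : (-1 : ℤ) ^ (2 * h) = 1 := by simp [pow_mul]
    simp only [hg, c1, c2, p1]
    push_cast
    ring
  have hsplit : ∑ j ∈ Finset.range (2 * h + 1), g j
      = ∑ j ∈ Finset.range (2 * h), g j + g (2 * h) := Finset.sum_range_succ g (2 * h)
  have hS : ∑ k ∈ Finset.range h,
        ((n.choose (2 * k + 1) : ℤ) * ((n.choose (2 * k + 2) : ℤ) - (n.choose (2 * k) : ℤ)))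
      = (2 * h + 1 : ℤ) - (-1) ^ h * (n.choose h : ℤ) := by
    have := hsplit
    rw [hkey, hpair, hg2h] at this
    linarith
  have hsym : (n.choose h : ℤ) = (n.choose (h + 1) : ℤ) := by
    have h5 := Nat.choose_symm (n := 2 * h + 1) (k := h + 1) (by omega)
    have e : 2 * h + 1 - (h + 1) = h := by omega
    rw [e] at h5
    exact_mod_cast h5
  have hsq : (-1 : ℤ) ^ h * (-1) ^ h = 1 := by rw [← mul_pow]; simp
  rw [hS, hsym]
  have : (-1 : ℤ) ^ (h + 1) = (-1) ^ h * (-1) := by rw [pow_succ]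
  rw [this]
  linear_combination ((n.choose (h + 1) : ℤ)) * hsq
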